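/- Let ε > 0, β = γ = 0 and E > 0. Then (E/2, E/2, 0) and (E/2, E/2, π) are fixed points of the two-site energy-phase system. Moreover, if E ≥ ε, then (½(E + √(E² − ε²)), ½(E − √(E² − ε²)), π) and (½(E − √(E² − ε²)), ½(E + √(E² − ε²)), π) are also fixed points (where in the case E = ε both energies equal E/2, which must be positive). -/

import Mathlib

/-- `(E₁, E₂, ψ)` is a fixed point of the two-site energy-phase system with
parameters `ε, γ, β`: all three right-hand sides vanish. -/
def IsTwoSiteFixedPoint (ε γ β E1 E2 ψ : ℝ) : Prop :=
  2 * ε * Real.sqrt (E1 * E2) * Real.sin ψ + 2 * β * E1 = 0 ∧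
  -(2 * ε * Real.sqrt (E1 * E2) * Real.sin ψ) - 2 * γ * E2 = 0 ∧
  2 * (E2 - E1) * (1 + ε * Real.cos ψ / (2 * Real.sqrt (E1 * E2))) = 0

/-- The four families of breathers of the undamped, undriven two-site system. -/
theorem stmt_15 (ε E : ℝ) (hε : 0 < ε) (hE : 0 < E) :
    IsTwoSiteFixedPoint ε 0 0 (E / 2) (E / 2) 0 ∧
    IsTwoSiteFixedPoint ε 0 0 (E / 2) (E / 2) Real.pi ∧
    (ε ≤ E →
      IsTwoSiteFixedPoint ε 0 0
        ((1 / 2) * (E + Real.sqrt (E ^ 2 - ε ^ 2)))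
        ((1 / 2) * (E - Real.sqrt (E ^ 2 - ε ^ 2))) Real.pi ∧
      IsTwoSiteFixedPoint ε 0 0
        ((1 / 2) * (E - Real.sqrt (E ^ 2 - ε ^ 2)))
        ((1 / 2) * (E + Real.sqrt (E ^ 2 - ε ^ 2))) Real.pi) := by
  refine ⟨⟨?_, ?_, ?_⟩, ⟨?_, ?_, ?_⟩, fun hEε => ?_⟩
  · simp
  · simp
  · simp
  · simp
  · simp
  · simp
  · have hsq : E ^ 2 - ε ^ 2 ≥ 0 := by nlinarith
    set s := Real.sqrt (E ^ 2 - ε ^ 2) with hs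
    have hs2 : s ^ 2 = E ^ 2 - ε ^ 2 := Real.sq_sqrt hsq
    have hprod : (1 / 2 * (E + s)) * (1 / 2 * (E - s)) = (ε / 2) ^ 2 := by
      nlinarith
    have hprod2 : (1 / 2 * (E - s)) * (1 / 2 * (E + s)) = (ε / 2) ^ 2 := by
      nlinarith
    have hsqrt : Real.sqrt ((ε / 2) ^ 2) = ε / 2 := Real.sqrt_sq (by linarith)
    have hkey : 1 + ε * Real.cos Real.pi / (2 * (ε / 2)) = 0 := by
      rw [Real.cos_pi]; field_simp; norm_num
    constructor
    · refine ⟨?_, ?_, ?_⟩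
      · simp
      · simp
      · rw [hprod, hsqrt, hkey, mul_zero]
    · refine ⟨?_, ?_, ?_⟩
      · simp
      · simp
      · rw [hprod2, hsqrt, hkey, mul_zero]
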